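/- Let Θ₀, Θ₁, Θ₂ be three circles (or lines) in the extended complex plane ℂ ∪ {∞} such that Θ₀ ∩ Θ₁ consists of exactly two points and Θ₀ ∩ Θ₁ ∩ Θ₂ = ∅. Then there is at most one circle simultaneously perpendicular to Θ₀, Θ₁, and Θ₂. -/

import Mathlib

open Complex

/-- A generalized circle (circle or line) in ℂ ∪ {∞}, given by the equation
`a|z|² + 2 Re(b̄ z) + c = 0` with the nondegeneracy condition `|b|² > a c`
(which ensures the solution set is a genuine circle or line). -/
structure GenCircle where
  a : ℝ
  b : ℂ
  c : ℝ
  nondeg : a * c < Complex.normSq b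

namespace GenCircle

/-- The set of points of a generalized circle in the Riemann sphere ℂ ∪ {∞}.
The point ∞ lies on the circle exactly when `a = 0` (i.e. it is a line). -/
def carrier (C : GenCircle) : Set (OnePoint ℂ) :=
  {p | (p = (OnePoint.infty : OnePoint ℂ) ∧ C.a = 0) ∨
    ∃ z : ℂ, p = (z : OnePoint ℂ) ∧
      C.a * Complex.normSq z + 2 * ((starRingEnd ℂ C.b) * z).re + C.c = 0}

/-- Perpendicularity of two generalized circles: the vanishing of the
inversive product `2 Re(b₁ b̄₂) - a₁ c₂ - a₂ c₁`. -/
def Perp (C D : GenCircle) : Prop :=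
  2 * (C.b * starRingEnd ℂ D.b).re = C.a * D.c + D.a * C.c

end GenCircle

open OnePoint
noncomputable section
namespace StmtAux

abbrev V4 : Type := ℝ × ℂ × ℝ

def Bform : V4 →ₗ[ℝ] V4 →ₗ[ℝ] ℝ :=
  LinearMap.mk₂ ℝ
    (fun v w => 2*(v.2.1.re*w.2.1.re + v.2.1.im*w.2.1.im) - v.1*w.2.2 - w.1*v.2.2)
    (fun m₁ m₂ n => by simp; ring)
    (fun c m n => by simp [Complex.real_smul, smul_eq_mul]; ring)
    (fun m n₁ n₂ => by simp; ring)
    (fun c m n => by simp [Complex.real_smul, smul_eq_mul]; ring)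

lemma Bform_apply (v w : V4) :
    Bform v w = 2*(v.2.1.re*w.2.1.re + v.2.1.im*w.2.1.im) - v.1*w.2.2 - w.1*v.2.2 := rfl

lemma Bform_comm (v w : V4) : Bform v w = Bform w v := by
  simp only [Bform_apply]; ring

def vec (C : GenCircle) : V4 := (C.a, C.b, C.c)

def nvec : OnePoint ℂ → V4
  | ∞ => (0, 0, -1)
  | (z : ℂ) => (-1, z, -Complex.normSq z)

lemma mem_carrier_iff (C : GenCircle) (p : OnePoint ℂ) :
    p ∈ C.carrier ↔ Bform (vec C) (nvec p) = 0 := by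
  cases p with
  | infty =>
      simp [GenCircle.carrier, nvec, Bform_apply, vec]
  | coe z =>
      simp only [GenCircle.carrier, nvec, Bform_apply, vec, Set.mem_setOf_eq,
        coe_ne_infty, false_and, false_or, coe_eq_coe, exists_eq_left',
        Complex.mul_re, Complex.conj_re, Complex.conj_im, Complex.normSq_apply]
      constructor <;> intro h <;> linarith

lemma perp_iff (C D : GenCircle) : C.Perp D ↔ Bform (vec C) (vec D) = 0 := by
  simp only [GenCircle.Perp, Bform_apply, vec, Complex.mul_re, Complex.conj_re,
    Complex.conj_im]
  constructor <;> intro h <;> linarith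

lemma vec_ne_zero (C : GenCircle) : vec C ≠ 0 := by
  intro h
  have hn := C.nondeg
  simp only [vec, Prod.ext_iff, Prod.mk.injEq] at h
  obtain ⟨h1, h2, h3⟩ := h
  simp only [h1, h2, h3] at hn
  simp at hn

lemma Bform_vec_ne_zero (C : GenCircle) : Bform (vec C) ≠ 0 := by
  intro h
  have h1 := LinearMap.congr_fun h (0, 0, -1)
  have h2 := LinearMap.congr_fun h (-1, 0, 0)
  have h3 := LinearMap.congr_fun h (0, 1, 0)
  have h4 := LinearMap.congr_fun h (0, Complex.I, 0)
  simp [Bform_apply, vec] at h1 h2 h3 h4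
  have hn := C.nondeg
  have hb : C.b = 0 := Complex.ext h3 h4
  simp only [h1, h2, hb] at hn
  simp at hn


lemma exists_three (C : GenCircle) :
    ∃ x y z : OnePoint ℂ, x ≠ y ∧ x ≠ z ∧ y ≠ z ∧
      x ∈ C.carrier ∧ y ∈ C.carrier ∧ z ∈ C.carrier := by
  by_cases ha : C.a = 0
  · -- a line
    have hb : C.b ≠ 0 := by
      intro h
      have hn := C.nondeg
      rw [ha, h] at hn
      simp at hn
    have hnb : Complex.normSq C.b ≠ 0 := by
      simpa [Complex.normSq_eq_zero] using hb
    set t : ℝ := C.c / (2 * Complex.normSq C.b) with ht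
    set z0 : ℂ := -(t : ℂ) * C.b with hz0
    set z1 : ℂ := z0 + Complex.I * C.b with hz1
    refine ⟨∞, (z0 : OnePoint ℂ), (z1 : OnePoint ℂ), ?_, ?_, ?_, ?_, ?_, ?_⟩
    · exact infty_ne_coe z0
    · exact infty_ne_coe z1
    · rw [ne_eq, coe_eq_coe, hz1]
      intro h
      nth_rewrite 1 [show z0 = z0 + 0 by ring] at h
      have := add_left_cancel h
      exact hb (by simpa [Complex.ext_iff] using this.symm)
    · exact Or.inl ⟨rfl, ha⟩
    · refine Or.inr ⟨z0, rfl, ?_⟩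
      have hre : ((starRingEnd ℂ C.b) * z0).re = -t * Complex.normSq C.b := by
        simp [hz0, Complex.mul_re, Complex.normSq_apply]
        ring
      rw [ha, hre, ht]
      field_simp
      ring
    · refine Or.inr ⟨z1, rfl, ?_⟩
      have hre : ((starRingEnd ℂ C.b) * z1).re = -t * Complex.normSq C.b := by
        simp [hz1, hz0, Complex.mul_re, Complex.normSq_apply, Complex.add_re,
          Complex.add_im, Complex.I_re, Complex.I_im]
        ring
      rw [ha, hre, ht]
      field_simp
      ring
  · -- a circle
    have hpos : 0 < Complex.normSq C.b - C.a * C.c := sub_pos.2 C.nondeg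
    set σ : ℝ := Real.sqrt (Complex.normSq C.b - C.a * C.c) with hσdef
    have hσpos : 0 < σ := Real.sqrt_pos.2 hpos
    have hσsq : σ ^ 2 = Complex.normSq C.b - C.a * C.c := Real.sq_sqrt hpos.le
    set p1 : ℂ := ⟨(-C.b.re + σ) / C.a, (-C.b.im) / C.a⟩ with hp1
    set p2 : ℂ := ⟨(-C.b.re - σ) / C.a, (-C.b.im) / C.a⟩ with hp2
    set p3 : ℂ := ⟨(-C.b.re) / C.a, (-C.b.im + σ) / C.a⟩ with hp3
    have key : ∀ x y : ℝ, (x * C.a - (-C.b.re)) ^ 2 + (y * C.a - (-C.b.im)) ^ 2 = σ ^ 2 →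
        C.a * Complex.normSq ⟨x, y⟩ + 2 * ((starRingEnd ℂ C.b) * ⟨x, y⟩).re + C.c = 0 := by
      intro x y hxy
      have hs : σ ^ 2 = C.b.re ^ 2 + C.b.im ^ 2 - C.a * C.c := by
        rw [hσsq, Complex.normSq_apply]; ring
      have h2 : C.a * (C.a * (x * x + y * y) + 2 * (C.b.re * x + C.b.im * y) + C.c) = 0 := by
        linear_combination hxy + hs
      have h3 := (mul_eq_zero.mp h2).resolve_left ha
      simp only [Complex.normSq_apply, Complex.mul_re, Complex.conj_re, Complex.conj_im]
      linarith [h3]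
    refine ⟨(p1 : OnePoint ℂ), (p2 : OnePoint ℂ), (p3 : OnePoint ℂ), ?_, ?_, ?_, ?_, ?_, ?_⟩
    · rw [ne_eq, coe_eq_coe, hp1, hp2]
      intro h
      rw [Complex.ext_iff] at h
      obtain ⟨h1, h2⟩ := h
      try simp only at h1 h2
      rw [div_eq_div_iff ha ha] at h1
      have := mul_right_cancel₀ ha h1
      linarith
    · rw [ne_eq, coe_eq_coe, hp1, hp3]
      intro h
      rw [Complex.ext_iff] at h
      obtain ⟨h1, h2⟩ := h
      try simp only at h1 h2
      rw [div_eq_div_iff ha ha] at h2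
      have := mul_right_cancel₀ ha h2
      linarith
    · rw [ne_eq, coe_eq_coe, hp2, hp3]
      intro h
      rw [Complex.ext_iff] at h
      obtain ⟨h1, h2⟩ := h
      try simp only at h1 h2
      rw [div_eq_div_iff ha ha] at h2
      have := mul_right_cancel₀ ha h2
      linarith
    · exact Or.inr ⟨p1, rfl, key _ _ (by
        rw [div_mul_cancel₀ _ ha, div_mul_cancel₀ _ ha]; ring)⟩
    · exact Or.inr ⟨p2, rfl, key _ _ (by
        rw [div_mul_cancel₀ _ ha, div_mul_cancel₀ _ ha]; ring)⟩
    · exact Or.inr ⟨p3, rfl, key _ _ (by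
        rw [div_mul_cancel₀ _ ha, div_mul_cancel₀ _ ha]; ring)⟩

lemma carrier_ne_pair (C : GenCircle) (p q : OnePoint ℂ) : C.carrier ≠ {p, q} := by
  obtain ⟨x, y, z, hxy, hxz, hyz, hx, hy, hz⟩ := exists_three C
  intro h
  rw [h] at hx hy hz
  simp only [Set.mem_insert_iff, Set.mem_singleton_iff] at hx hy hz
  rcases hx with rfl | rfl <;> rcases hy with rfl | rfl <;> rcases hz with rfl | rfl <;>
    simp_all

end StmtAux

end

open StmtAux

/-- If Θ₀ ∩ Θ₁ consists of exactly two points and Θ₀ ∩ Θ₁ ∩ Θ₂ = ∅, then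
there is at most one circle simultaneously perpendicular to Θ₀, Θ₁, Θ₂. -/
theorem stmt_3 (Θ₀ Θ₁ Θ₂ : GenCircle)
    (htwo : (Θ₀.carrier ∩ Θ₁.carrier).ncard = 2)
    (hempty : Θ₀.carrier ∩ Θ₁.carrier ∩ Θ₂.carrier = ∅)
    (D D' : GenCircle)
    (hD : D.Perp Θ₀ ∧ D.Perp Θ₁ ∧ D.Perp Θ₂)
    (hD' : D'.Perp Θ₀ ∧ D'.Perp Θ₁ ∧ D'.Perp Θ₂) :
    D.carrier = D'.carrier := by
  classical
  obtain ⟨hD0, hD1, hD2⟩ := hD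
  obtain ⟨hD'0, hD'1, hD'2⟩ := hD'
  obtain ⟨p, q, hpq, hset⟩ := Set.ncard_eq_two.mp htwo
  have hp : p ∈ Θ₀.carrier ∩ Θ₁.carrier := by rw [hset]; exact Set.mem_insert _ _
  have hp2 : p ∉ Θ₂.carrier := by
    intro h
    have hmem : p ∈ Θ₀.carrier ∩ Θ₁.carrier ∩ Θ₂.carrier := ⟨hp, h⟩
    rw [hempty] at hmem
    exact hmem
  have hf2p : Bform (vec Θ₂) (nvec p) ≠ 0 := fun h => hp2 ((mem_carrier_iff _ _).mpr h)
  have h0p : Bform (vec Θ₀) (nvec p) = 0 := (mem_carrier_iff _ _).mp hp.1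
  have h1p : Bform (vec Θ₁) (nvec p) = 0 := (mem_carrier_iff _ _).mp hp.2
  have hcarrier_of_smul : ∀ (C C' : GenCircle) (μ : ℝ), μ ≠ 0 →
      Bform (vec C) = μ • Bform (vec C') → C.carrier = C'.carrier := by
    intro C C' μ hμ h
    ext pt
    rw [mem_carrier_iff, mem_carrier_iff, h]
    simp [LinearMap.smul_apply, smul_eq_mul, mul_eq_zero, hμ]
  have hind : LinearIndependent ℝ ![Bform (vec Θ₀), Bform (vec Θ₁), Bform (vec Θ₂)] := by
    rw [Fintype.linearIndependent_iff]
    intro g hg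
    simp only [Fin.sum_univ_three, Matrix.cons_val_zero, Matrix.cons_val_one,
      Matrix.head_cons, Matrix.cons_val_two, Matrix.tail_cons] at hg
    have hgp := LinearMap.congr_fun hg (nvec p)
    simp only [LinearMap.add_apply, LinearMap.smul_apply, h0p, h1p, smul_eq_mul,
      mul_zero, zero_add, add_zero, LinearMap.zero_apply] at hgp
    have hg2 : g 2 = 0 := by
      rcases mul_eq_zero.mp hgp with h | h
      · exact h
      · exact absurd h hf2p
    rw [hg2, zero_smul, add_zero] at hg
    have hg0 : g 0 = 0 := by
      by_contra h0
      have h' := eq_neg_of_add_eq_zero_left hg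
      have hf : Bform (vec Θ₀) = (-(g 1) * (g 0)⁻¹) • Bform (vec Θ₁) := by
        calc Bform (vec Θ₀) = (g 0)⁻¹ • (g 0 • Bform (vec Θ₀)) := by
              rw [smul_smul, inv_mul_cancel₀ h0, one_smul]
          _ = (g 0)⁻¹ • -(g 1 • Bform (vec Θ₁)) := by rw [h']
          _ = (-(g 1) * (g 0)⁻¹) • Bform (vec Θ₁) := by
              refine LinearMap.ext fun v => ?_
              simp only [LinearMap.smul_apply, LinearMap.neg_apply, smul_eq_mul]; ring
      have hμ : -(g 1) * (g 0)⁻¹ ≠ 0 := by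
        intro h
        rw [h, zero_smul] at hf
        exact Bform_vec_ne_zero Θ₀ hf
      have hcc := hcarrier_of_smul Θ₀ Θ₁ _ hμ hf
      have hΘ0 : Θ₀.carrier = {p, q} := by
        rw [← hset, hcc, Set.inter_self]
      exact carrier_ne_pair Θ₀ p q hΘ0
    rw [hg0, zero_smul, zero_add] at hg
    have hg1 : g 1 = 0 := by
      by_contra h1
      apply Bform_vec_ne_zero Θ₁
      have h2 := congrArg (fun x => (g 1)⁻¹ • x) hg
      simpa [smul_smul, inv_mul_cancel₀ h1] using h2
    intro i
    fin_cases i <;> assumption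
  set W : Subspace ℝ (Module.Dual ℝ V4) :=
    Submodule.span ℝ (Set.range ![Bform (vec Θ₀), Bform (vec Θ₁), Bform (vec Θ₂)]) with hW
  have hfrW : Module.finrank ℝ W = 3 := by
    rw [hW, finrank_span_eq_card hind]
    simp
  have hV4 : Module.finrank ℝ V4 = 4 := by
    rw [Module.finrank_prod, Module.finrank_prod, Complex.finrank_real_complex,
      Module.finrank_self]
  have hco : Module.finrank ℝ W.dualCoannihilator = 1 := by
    have h := Subspace.finrank_add_finrank_dualCoannihilator_eq W
    rw [hfrW, hV4] at h
    omega
  have hmem : ∀ E : GenCircle, E.Perp Θ₀ → E.Perp Θ₁ → E.Perp Θ₂ →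
      vec E ∈ W.dualCoannihilator := by
    intro E h0 h1 h2
    rw [Submodule.mem_dualCoannihilator]
    intro φ hφ
    rw [hW] at hφ
    obtain ⟨cγ, rfl⟩ := (Submodule.mem_span_range_iff_exists_fun ℝ).mp hφ
    have e0 : Bform (vec Θ₀) (vec E) = 0 := by
      rw [Bform_comm]; exact (perp_iff _ _).mp h0
    have e1 : Bform (vec Θ₁) (vec E) = 0 := by
      rw [Bform_comm]; exact (perp_iff _ _).mp h1
    have e2 : Bform (vec Θ₂) (vec E) = 0 := by
      rw [Bform_comm]; exact (perp_iff _ _).mp h2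
    simp [Fin.sum_univ_three, e0, e1, e2]
  have hDmem := hmem D hD0 hD1 hD2
  have hD'mem := hmem D' hD'0 hD'1 hD'2
  have hspan : Submodule.span ℝ {vec D} = W.dualCoannihilator := by
    apply Submodule.eq_of_le_of_finrank_le
    · rw [Submodule.span_singleton_le_iff_mem]
      exact hDmem
    · rw [hco, finrank_span_singleton (vec_ne_zero D)]
  rw [← hspan] at hD'mem
  obtain ⟨l, hl⟩ := Submodule.mem_span_singleton.mp hD'mem
  have hlne : l ≠ 0 := by
    rintro rfl
    rw [zero_smul] at hl
    exact vec_ne_zero D' hl.symm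
  ext pt
  rw [mem_carrier_iff, mem_carrier_iff, ← hl, _root_.map_smul]
  simp [LinearMap.smul_apply, smul_eq_mul, mul_eq_zero, hlne]
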